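/- Let ((X_k, Y_k))_{k≥1} be i.i.d. samples from a bivariate Gaussian distribution with covariance c = E[X_1 Y_1] − E[X_1]E[Y_1], and let Ĉ_m be the empirical covariance based on the first m samples. If c ≠ 0, then P(|Ĉ_m| ≥ m^{−1/5}) → 1 as m → ∞; and if c = 0, then P(|Ĉ_m| ≤ m^{−1/5}) → 1 as m → ∞. -/

import Mathlib

open MeasureTheory ProbabilityTheory Filter

set_option maxHeartbeats 1000000

open scoped NNReal ENNReal

section Aux

open Real

lemma gaussian_centered_memLp4 (v : ℝ≥0) : MemLp id 4 (gaussianReal 0 v) := by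
  rcases eq_or_ne v 0 with rfl | hv
  · rw [gaussianReal_zero_var]
    have h : (id : ℝ → ℝ) =ᵐ[Measure.dirac (0:ℝ)] fun _ => (0:ℝ) := by
      rw [Filter.EventuallyEq, ae_dirac_eq]; simp
    exact (memLp_const (0:ℝ)).ae_eq h.symm
  · have key : Integrable (fun x : ℝ => |x| ^ ((4:ℝ≥0∞).toReal)) (gaussianReal 0 v) := by
      rw [gaussianReal_of_var_ne_zero 0 hv]
      rw [integrable_withDensity_iff (measurable_gaussianPDF 0 v)
        (Filter.Eventually.of_forall fun x => ENNReal.ofReal_lt_top)]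
      have hv' : (0:ℝ) < (v:ℝ) := by positivity
      have hb : (0:ℝ) < (2*(v:ℝ))⁻¹ := by positivity
      have := (integrable_rpow_mul_exp_neg_mul_sq hb (s := 4) (by norm_num)).const_mul
          ((Real.sqrt (2 * π * v))⁻¹)
      apply this.congr
      filter_upwards with x
      rw [gaussianPDF, ENNReal.toReal_ofReal (gaussianPDFReal_nonneg 0 v x), gaussianPDFReal]
      rw [show -(x - 0)^2/(2*(v:ℝ)) = -(2*(v:ℝ))⁻¹ * x^2 by field_simp; ring]
      rw [show ((4:ℝ≥0∞).toReal) = ((4:ℕ):ℝ) by norm_num,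
        show ((4:ℝ)) = ((4:ℕ):ℝ) by norm_num, Real.rpow_natCast, Real.rpow_natCast,
        pow_abs, abs_of_nonneg (by positivity : (0:ℝ) ≤ x ^ 4)]
      ring
    have h := (memLp_norm_rpow_iff (q := 4) (p := 4)
        (aestronglyMeasurable_id (μ := gaussianReal 0 v)) (by norm_num) (by norm_num)).mp
    apply h
    rw [show (4/4 : ℝ≥0∞) = 1 from ENNReal.div_self (by norm_num) (by norm_num),
      memLp_one_iff_integrable]
    simpa [Real.norm_eq_abs] using key

lemma map_add_const' {Ω : Type*} [MeasurableSpace Ω] {P : Measure Ω}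
    {X : Ω → ℝ} (hX : Measurable X) {μ : ℝ} {v : ℝ≥0}
    (hmap : P.map X = gaussianReal μ v) (y : ℝ) :
    P.map (fun ω => X ω + y) = gaussianReal (μ + y) v := by
  have : P.map (fun ω => X ω + y) = (P.map X).map (fun x => x + y) :=
    (Measure.map_map (measurable_id'.add_const _) hX).symm
  rw [this, hmap, gaussianReal_map_add_const]

lemma gaussianRV_memLp4 {Ω : Type*} [MeasurableSpace Ω] {P : Measure Ω} [IsProbabilityMeasure P]
    {X : Ω → ℝ} (hX : Measurable X) {μ : ℝ} {v : ℝ≥0}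
    (hmap : P.map X = gaussianReal μ v) : MemLp X 4 P := by
  have h0 : P.map (fun ω => X ω + (-μ)) = gaussianReal 0 v := by
    rw [map_add_const' hX hmap (-μ)]; norm_num
  have hg : MemLp (fun ω => X ω + (-μ)) 4 P := by
    have := (memLp_map_measure_iff (aestronglyMeasurable_id) (hX.add_const (-μ)).aemeasurable
      (μ := P) (p := 4)).mp
    rw [h0] at this
    exact this (gaussian_centered_memLp4 v)
  have : X = fun ω => (X ω + (-μ)) + μ := by funext ω; ring
  rw [this]
  exact hg.add (memLp_const μ)

lemma gaussianRV_mean {Ω : Type*} [MeasurableSpace Ω] {P : Measure Ω} [IsProbabilityMeasure P]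
    {X : Ω → ℝ} (hX : Measurable X) {μ : ℝ} {v : ℝ≥0}
    (hmap : P.map X = gaussianReal μ v) : ∫ ω, X ω ∂P = μ := by
  have hmeas : Measurable (fun ω => X ω + (-μ)) := hX.add_const _
  have h0 : P.map (fun ω => X ω + (-μ)) = gaussianReal 0 v := by
    rw [map_add_const' hX hmap (-μ)]; norm_num
  have h1 : P.map (fun ω => (-1 : ℝ) * (X ω + (-μ))) = gaussianReal 0 v := by
    have : P.map (fun ω => (-1:ℝ) * (X ω + (-μ)))
        = (P.map (fun ω => X ω + (-μ))).map (fun x => (-1:ℝ) * x) :=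
      (Measure.map_map (measurable_id'.const_mul _) hmeas).symm
    rw [this, h0, gaussianReal_map_const_mul]
    norm_num
  have e1 : ∫ ω, (X ω + (-μ)) ∂P = ∫ x, x ∂(gaussianReal 0 v) := by
    rw [← h0]
    exact (integral_map hmeas.aemeasurable aestronglyMeasurable_id).symm
  have e2 : ∫ ω, (-1 : ℝ) * (X ω + (-μ)) ∂P = ∫ x, x ∂(gaussianReal 0 v) := by
    rw [← h1]
    exact (integral_map (hmeas.const_mul (-1)).aemeasurable aestronglyMeasurable_id).symm
  have e3 : ∫ ω, (-1 : ℝ) * (X ω + (-μ)) ∂P = - ∫ ω, (X ω + (-μ)) ∂P := by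
    rw [← integral_neg]
    congr 1; funext ω; ring
  have hzero : ∫ ω, (X ω + (-μ)) ∂P = 0 := by
    rw [e3, e1] at e2
    linarith [e1, e2]
  have hint : Integrable X P := (gaussianRV_memLp4 hX hmap).integrable (by norm_num)
  have h5 := integral_add (hint) (integrable_const (-μ)) (μ := P)
  simp only [integral_const, measure_univ, probReal_univ, ENNReal.toReal_one, smul_eq_mul, one_mul] at h5
  rw [h5] at hzero
  linarith

lemma cheb_tendsto {Ω : Type*} [MeasurableSpace Ω] (P : Measure Ω) [IsProbabilityMeasure P]
    (ξ : ℕ → Ω → ℝ)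
    (hind : ∀ i j, i ≠ j → IndepFun (ξ i) (ξ j) P)
    (hid : ∀ k, IdentDistrib (ξ k) (ξ 0) P P)
    (hL2 : MemLp (ξ 0) 2 P) (μ0 : ℝ) (hmean : ∫ ω, ξ 0 ω ∂P = μ0)
    (K : ℝ) (hK : 0 < K) :
    Tendsto (fun m : ℕ =>
      P {ω | (m:ℝ)^(-(1/5:ℝ))/K ≤ |(∑ k ∈ Finset.range m, ξ k ω)/m - μ0|}) atTop (nhds 0) := by
  set V := variance (ξ 0) P with hV
  have hL2k : ∀ k, MemLp (ξ k) 2 P := fun k => (hid k).symm.memLp_snd hL2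
  have key : ∀ m : ℕ, 1 ≤ m →
      P {ω | (m:ℝ)^(-(1/5:ℝ))/K ≤ |(∑ k ∈ Finset.range m, ξ k ω)/m - μ0|}
        ≤ ENNReal.ofReal (V * K^2 * (m:ℝ)^(-(3/5:ℝ))) := by
    intro m hm
    have hm0 : (0:ℝ) < m := by exact_mod_cast hm
    have hε : (0:ℝ) < (m:ℝ)^(-(1/5:ℝ)) := Real.rpow_pos_of_pos hm0 _
    set S : Ω → ℝ := ∑ k ∈ Finset.range m, ξ k with hS
    have hS2 : MemLp S 2 P := memLp_finset_sum' _ (fun k _ => hL2k k)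
    have hES : ∫ ω, S ω ∂P = m * μ0 := by
      rw [hS]
      simp only [Finset.sum_apply]
      rw [integral_finset_sum _ (fun k _ => (hL2k k).integrable one_le_two)]
      rw [Finset.sum_congr rfl (fun k _ => (hid k).integral_eq.trans hmean)]
      simp [mul_comm]
    have hVarS : variance S P = m * V := by
      rw [hS, IndepFun.variance_sum (fun k _ => hL2k k)
        (fun i _ j _ hij => hind i j hij)]
      rw [Finset.sum_congr rfl (fun k _ => (hid k).variance_eq)]
      simp [mul_comm, hV]
    have hsetEq : {ω | (m:ℝ)^(-(1/5:ℝ))/K ≤ |(∑ k ∈ Finset.range m, ξ k ω)/m - μ0|}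
        = {ω | (m:ℝ) * ((m:ℝ)^(-(1/5:ℝ))/K) ≤ |S ω - P[S]|} := by
      ext ω
      simp only [Set.mem_setOf_eq, hES]
      rw [hS]
      simp only [Finset.sum_apply]
      rw [show (∑ k ∈ Finset.range m, ξ k ω)/m - μ0
          = ((∑ k ∈ Finset.range m, ξ k ω) - m * μ0)/m by field_simp]
      rw [abs_div, abs_of_pos hm0, le_div_iff₀ hm0]
      constructor <;> intro h <;> linarith
    rw [hsetEq]
    refine le_trans (meas_ge_le_variance_div_sq hS2 (by positivity)) ?_
    apply ENNReal.ofReal_le_ofReal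
    rw [hVarS]
    have h25 : ((m:ℝ)^(-(1/5:ℝ)))^(2:ℕ) = (m:ℝ)^(-2/5 : ℝ) := by
      rw [← Real.rpow_natCast ((m:ℝ)^(-(1/5:ℝ))) 2, ← Real.rpow_mul hm0.le]
      norm_num
    have hm2 : (m:ℝ)^(2:ℕ) = (m:ℝ)^(2:ℝ) := by
      rw [← Real.rpow_natCast (m:ℝ) 2]
      norm_num
    have e : (m:ℝ)^(-(3/5:ℝ)) * ((m:ℝ)^(2:ℝ) * (m:ℝ)^(-2/5:ℝ)) = m := by
      rw [← Real.rpow_add hm0, ← Real.rpow_add hm0]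
      norm_num
    have hA : (0:ℝ) < (m:ℝ)^(2:ℝ) := Real.rpow_pos_of_pos hm0 _
    have hB : (0:ℝ) < (m:ℝ)^(-2/5:ℝ) := Real.rpow_pos_of_pos hm0 _
    have heq : (m:ℝ) * V / ((m:ℝ) * ((m:ℝ)^(-(1/5:ℝ))/K))^2 = V * K^2 * (m:ℝ)^(-(3/5:ℝ)) := by
      rw [mul_pow, div_pow, h25, hm2]
      rw [show (m:ℝ)^(2:ℝ) * ((m:ℝ)^(-2/5:ℝ)/K^2) = ((m:ℝ)^(2:ℝ) * (m:ℝ)^(-2/5:ℝ))/K^2 by ring]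
      rw [div_div_eq_mul_div, div_eq_iff (by positivity)]
      linear_combination (-(V*K^2)) * e
    rw [heq]
  have ht : Tendsto (fun m : ℕ => V * K^2 * (m:ℝ)^(-(3/5:ℝ))) atTop (nhds 0) := by
    have h1 : Tendsto (fun x : ℝ => x ^ (-(3/5:ℝ))) atTop (nhds 0) :=
      tendsto_rpow_neg_atTop (by norm_num)
    have h2 := (h1.comp tendsto_natCast_atTop_atTop).const_mul (V*K^2)
    simpa using h2
  have hb : Tendsto (fun m : ℕ => ENNReal.ofReal (V * K^2 * (m:ℝ)^(-(3/5:ℝ)))) atTop (nhds 0) := by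
    have h3 := ENNReal.tendsto_ofReal ht
    simpa using h3
  refine tendsto_of_tendsto_of_tendsto_of_le_of_le' tendsto_const_nhds hb
    (Eventually.of_forall fun m => zero_le) ?_
  filter_upwards [eventually_ge_atTop 1] with m hm using key m hm

end Aux

/-- A measure `ν` on `ℝ × ℝ` is bivariate Gaussian with means `μX, μY`, variances `vX, vY`
and covariance `c` if every linear combination of the coordinates is Gaussian with the
corresponding mean and variance. -/
def IsGaussianPair (ν : Measure (ℝ × ℝ)) (μX μY vX vY c : ℝ) : Prop :=
  ∀ a b : ℝ, ν.map (fun p => a * p.1 + b * p.2) =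
    gaussianReal (a * μX + b * μY) (a ^ 2 * vX + 2 * a * b * c + b ^ 2 * vY).toNNReal

/-- edge-detection criterion of the paper's Lemma 1. For i.i.d. bivariate
Gaussian samples with covariance `c = E[X·Y] − E[X]E[Y]` and empirical covariance `Ĉ_m`:
if `c ≠ 0` then `P(|Ĉ_m| ≥ m^{−1/5}) → 1`, and if `c = 0` then `P(|Ĉ_m| ≤ m^{−1/5}) → 1`. -/
theorem empirical_covariance_threshold
    {Ω : Type*} [MeasurableSpace Ω] (P : Measure Ω) [IsProbabilityMeasure P]
    (W : ℕ → Ω → ℝ × ℝ) (hmeas : ∀ k, Measurable (W k))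
    (hindep : iIndepFun W P)
    (hid : ∀ k, IdentDistrib (W k) (W 0) P P)
    (μX μY vX vY c : ℝ)
    (hgauss : IsGaussianPair (P.map (W 0)) μX μY vX vY c)
    (hc : c = (∫ ω, (W 0 ω).1 * (W 0 ω).2 ∂P) - μX * μY) :
    (c ≠ 0 →
      Tendsto (fun m : ℕ =>
          P {ω | (m : ℝ) ^ (-(1 / 5 : ℝ)) ≤
              |(∑ k ∈ Finset.range m, (W k ω).1 * (W k ω).2) / m
                - ((∑ k ∈ Finset.range m, (W k ω).1) / m)
                    * ((∑ k ∈ Finset.range m, (W k ω).2) / m)|})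
        atTop (nhds 1)) ∧
    (c = 0 →
      Tendsto (fun m : ℕ =>
          P {ω | |(∑ k ∈ Finset.range m, (W k ω).1 * (W k ω).2) / m
                - ((∑ k ∈ Finset.range m, (W k ω).1) / m)
                    * ((∑ k ∈ Finset.range m, (W k ω).2) / m)|
              ≤ (m : ℝ) ^ (-(1 / 5 : ℝ))})
        atTop (nhds 1)) := by

  -- the coordinate processes
  set X : ℕ → Ω → ℝ := fun k ω => (W k ω).1 with hX
  set Y : ℕ → Ω → ℝ := fun k ω => (W k ω).2 with hY
  set Z : ℕ → Ω → ℝ := fun k ω => (W k ω).1 * (W k ω).2 with hZ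
  have hXm : ∀ k, Measurable (X k) := fun k => (hmeas k).fst
  have hYm : ∀ k, Measurable (Y k) := fun k => (hmeas k).snd
  have hZm : ∀ k, Measurable (Z k) := fun k => (hmeas k).fst.mul (hmeas k).snd
  -- marginal laws
  have hmap_comb : ∀ a b : ℝ, P.map (fun ω => a * (W 0 ω).1 + b * (W 0 ω).2)
      = gaussianReal (a*μX+b*μY) (a^2*vX+2*a*b*c+b^2*vY).toNNReal := by
    intro a b
    have hco : (fun ω => a * (W 0 ω).1 + b * (W 0 ω).2)
        = (fun p : ℝ×ℝ => a * p.1 + b * p.2) ∘ (W 0) := rfl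
    rw [hco, ← Measure.map_map (g := fun p : ℝ×ℝ => a * p.1 + b * p.2) ((measurable_fst.const_mul a).add
      (measurable_snd.const_mul b)) (hmeas 0), hgauss a b]
  have hmapX : P.map (X 0) = gaussianReal μX vX.toNNReal := by
    have h := hmap_comb 1 0
    rw [show (fun ω => 1 * (W 0 ω).1 + 0 * (W 0 ω).2) = X 0 by funext ω; simp [hX]] at h
    rw [h]
    norm_num
  have hmapY : P.map (Y 0) = gaussianReal μY vY.toNNReal := by
    have h := hmap_comb 0 1
    rw [show (fun ω => 0 * (W 0 ω).1 + 1 * (W 0 ω).2) = Y 0 by funext ω; simp [hY]] at h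
    rw [h]
    norm_num
  have hmapU : P.map (fun ω => X 0 ω + Y 0 ω)
      = gaussianReal (μX+μY) (vX+2*c+vY).toNNReal := by
    have h := hmap_comb 1 1
    rw [show (fun ω => 1 * (W 0 ω).1 + 1 * (W 0 ω).2) = fun ω => X 0 ω + Y 0 ω by
      funext ω; simp [hX, hY]] at h
    rw [h]
    norm_num
  have hmapV : P.map (fun ω => X 0 ω + (-1) * Y 0 ω)
      = gaussianReal (μX-μY) (vX-2*c+vY).toNNReal := by
    have h := hmap_comb 1 (-1)
    rw [show (fun ω => 1 * (W 0 ω).1 + (-1) * (W 0 ω).2)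
        = fun ω => X 0 ω + (-1) * Y 0 ω by funext ω; simp [hX, hY]] at h
    rw [show (1:ℝ) * μX + -1 * μY = μX - μY by ring,
      show (1:ℝ)^2 * vX + 2*1*(-1)*c + (-1)^2*vY = vX - 2*c + vY by ring] at h
    exact h
  -- moments
  have hX4 : MemLp (X 0) 4 P := gaussianRV_memLp4 (hXm 0) hmapX
  have hY4 : MemLp (Y 0) 4 P := gaussianRV_memLp4 (hYm 0) hmapY
  have hU4 : MemLp (fun ω => X 0 ω + Y 0 ω) 4 P :=
    gaussianRV_memLp4 ((hXm 0).add (hYm 0)) hmapU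
  have hV4 : MemLp (fun ω => X 0 ω + (-1) * Y 0 ω) 4 P :=
    gaussianRV_memLp4 ((hXm 0).add ((hYm 0).const_mul _)) hmapV
  have hXL2 : MemLp (X 0) 2 P := hX4.mono_exponent (by norm_num)
  have hYL2 : MemLp (Y 0) 2 P := hY4.mono_exponent (by norm_num)
  -- squares of L⁴ functions are L²
  have sqL2 : ∀ f : Ω → ℝ, Measurable f → MemLp f 4 P → MemLp (fun ω => f ω ^ 2) 2 P := by
    intro f hfm hf4
    rw [memLp_two_iff_integrable_sq ((hfm.pow_const 2).aestronglyMeasurable)]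
    have := hf4.integrable_norm_rpow (by norm_num) (by norm_num)
    apply this.congr
    filter_upwards with ω
    rw [show ((4:ℝ≥0∞).toReal) = ((4:ℕ):ℝ) by norm_num, Real.norm_eq_abs,
      Real.rpow_natCast, pow_abs, abs_of_nonneg (by positivity : (0:ℝ) ≤ f ω ^ 4)]
    ring
  have hZL2 : MemLp (Z 0) 2 P := by
    have h1 := sqL2 _ ((hXm 0).add (hYm 0)) hU4
    have h2 := sqL2 _ ((hXm 0).add ((hYm 0).const_mul _)) hV4
    have h3 := (h1.sub h2).const_mul (1/4 : ℝ)
    apply h3.ae_eq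
    filter_upwards with ω
    show (1/4 : ℝ) * ((X 0 ω + Y 0 ω)^2 - (X 0 ω + (-1) * Y 0 ω)^2) = Z 0 ω
    simp only [hX, hY, hZ]
    ring
  -- means
  have hEX : ∫ ω, X 0 ω ∂P = μX := gaussianRV_mean (hXm 0) hmapX
  have hEY : ∫ ω, Y 0 ω ∂P = μY := gaussianRV_mean (hYm 0) hmapY
  have hEZ : ∫ ω, Z 0 ω ∂P = c + μX * μY := by
    simp only [hZ]
    linarith [hc]
  -- independence and identical distribution of coordinates
  have hindX : ∀ i j, i ≠ j → IndepFun (X i) (X j) P := fun i j hij =>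
    (hindep.indepFun hij).comp measurable_fst measurable_fst
  have hindY : ∀ i j, i ≠ j → IndepFun (Y i) (Y j) P := fun i j hij =>
    (hindep.indepFun hij).comp measurable_snd measurable_snd
  have hindZ : ∀ i j, i ≠ j → IndepFun (Z i) (Z j) P := fun i j hij =>
    (hindep.indepFun hij).comp (measurable_fst.mul measurable_snd)
      (measurable_fst.mul measurable_snd)
  have hidX : ∀ k, IdentDistrib (X k) (X 0) P P := fun k => (hid k).comp measurable_fst
  have hidY : ∀ k, IdentDistrib (Y k) (Y 0) P P := fun k => (hid k).comp measurable_snd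
  have hidZ : ∀ k, IdentDistrib (Z k) (Z 0) P P := fun k =>
    (hid k).comp (measurable_fst.mul measurable_snd)
  -- Chebyshev for the three averages
  set K0 : ℝ := 3 * (1 + |μX| + |μY|) with hK0
  have hK0pos : 0 < K0 := by positivity
  have htX := cheb_tendsto P X hindX hidX hXL2 μX hEX K0 hK0pos
  have htY := cheb_tendsto P Y hindY hidY hYL2 μY hEY K0 hK0pos
  have htZ := cheb_tendsto P Z hindZ hidZ hZL2 (c + μX * μY) hEZ 3 (by norm_num)
  -- the bad events
  set E1 : ℕ → Set Ω := fun m =>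
    {ω | (m:ℝ)^(-(1/5:ℝ))/3 ≤ |(∑ k ∈ Finset.range m, Z k ω)/m - (c + μX * μY)|} with hE1
  set E2 : ℕ → Set Ω := fun m =>
    {ω | (m:ℝ)^(-(1/5:ℝ))/K0 ≤ |(∑ k ∈ Finset.range m, X k ω)/m - μX|} with hE2
  set E3 : ℕ → Set Ω := fun m =>
    {ω | (m:ℝ)^(-(1/5:ℝ))/K0 ≤ |(∑ k ∈ Finset.range m, Y k ω)/m - μY|} with hE3
  set Chat : ℕ → Ω → ℝ := fun m ω =>
    (∑ k ∈ Finset.range m, (W k ω).1 * (W k ω).2) / m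
      - ((∑ k ∈ Finset.range m, (W k ω).1) / m) * ((∑ k ∈ Finset.range m, (W k ω).2) / m)
    with hChat
  set bad : ℕ → Set Ω := fun m => {ω | (m:ℝ)^(-(1/5:ℝ)) ≤ |Chat m ω - c|} with hbad
  have hCm : ∀ m, Measurable (Chat m) := by
    intro m
    apply Measurable.sub
    · exact (Finset.measurable_sum _ (fun k _ => (hmeas k).fst.mul (hmeas k).snd)).div_const _
    · exact ((Finset.measurable_sum _ (fun k _ => (hmeas k).fst)).div_const _).mul
        ((Finset.measurable_sum _ (fun k _ => (hmeas k).snd)).div_const _)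
  have hbadMeas : ∀ m, MeasurableSet (bad m) :=
    fun m => measurableSet_le measurable_const ((hCm m).sub measurable_const).abs
  -- containment in the union of the three bad events, for m ≥ 1
  have hsub : ∀ m : ℕ, 1 ≤ m → bad m ⊆ E1 m ∪ (E2 m ∪ E3 m) := by
    intro m hm ω hω
    by_contra hcon
    simp only [Set.mem_union, not_or] at hcon
    obtain ⟨h1, h2, h3⟩ := hcon
    simp only [hE1, hE2, hE3, Set.mem_setOf_eq, not_le] at h1 h2 h3
    have hm0 : (0:ℝ) < m := by exact_mod_cast hm
    set ε : ℝ := (m:ℝ)^(-(1/5:ℝ)) with hε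
    have hε0 : 0 < ε := Real.rpow_pos_of_pos hm0 _
    have hε1 : ε ≤ 1 := Real.rpow_le_one_of_one_le_of_nonpos (by exact_mod_cast hm) (by norm_num)
    have hωbad : ε ≤ |Chat m ω - c| := hω
    set A : ℝ := (∑ k ∈ Finset.range m, Z k ω)/m with hA
    set xb : ℝ := (∑ k ∈ Finset.range m, X k ω)/m with hxb
    set yb : ℝ := (∑ k ∈ Finset.range m, Y k ω)/m with hyb
    have hCval : Chat m ω = A - xb * yb := rfl
    set a1 : ℝ := xb - μX with ha1
    set b1 : ℝ := yb - μY with hb1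
    have hdecomp : Chat m ω - c = (A - (c + μX * μY)) - a1 * b1 - μY * a1 - μX * b1 := by
      rw [hCval, ha1, hb1]; ring
    have habs : |Chat m ω - c| ≤ |A - (c + μX * μY)| + |a1 * b1| + |μY * a1| + |μX * b1| := by
      rw [hdecomp]
      calc |A - (c + μX * μY) - a1 * b1 - μY * a1 - μX * b1|
          ≤ |A - (c + μX * μY) - a1 * b1 - μY * a1| + |μX * b1| := abs_sub _ _
        _ ≤ |A - (c + μX * μY) - a1 * b1| + |μY * a1| + |μX * b1| := by
            linarith [abs_sub (A - (c + μX * μY) - a1 * b1) (μY * a1)]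
        _ ≤ |A - (c + μX * μY)| + |a1 * b1| + |μY * a1| + |μX * b1| := by
            linarith [abs_sub (A - (c + μX * μY)) (a1 * b1)]
    have hK3 : (3:ℝ) ≤ K0 := by
      rw [hK0]; nlinarith [abs_nonneg μX, abs_nonneg μY]
    have hεK : ε / K0 ≤ 1 := by
      rw [div_le_one hK0pos]; linarith
    have hab : |a1 * b1| ≤ ε / K0 := by
      rw [abs_mul]
      calc |a1| * |b1| ≤ (ε/K0) * 1 := by
            apply mul_le_mul h2.le (le_trans h3.le hεK) (abs_nonneg _) (by positivity)
        _ = ε/K0 := mul_one _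
    have hya : |μY * a1| ≤ |μY| * (ε/K0) := by
      rw [abs_mul]; exact mul_le_mul_of_nonneg_left h2.le (abs_nonneg _)
    have hxb1 : |μX * b1| ≤ |μX| * (ε/K0) := by
      rw [abs_mul]; exact mul_le_mul_of_nonneg_left h3.le (abs_nonneg _)
    have hsumK : (1 + |μX| + |μY|) * (ε/K0) = ε/3 := by
      rw [hK0]; field_simp
    have hexp : (1 + |μX| + |μY|) * (ε/K0) = ε/K0 + |μX| * (ε/K0) + |μY| * (ε/K0) := by ring
    have : |Chat m ω - c| < ε := by
      linarith [habs, h1, hab, hya, hxb1, hsumK, hexp, hε0]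
    linarith [hωbad]
  -- P(bad m) → 0
  have htbad : Tendsto (fun m => P (bad m)) atTop (nhds 0) := by
    have hsum : Tendsto (fun m => P (E1 m) + (P (E2 m) + P (E3 m))) atTop (nhds 0) := by
      have h0 := htZ.add (htX.add htY)
      simp only [add_zero] at h0
      exact h0
    refine tendsto_of_tendsto_of_tendsto_of_le_of_le' tendsto_const_nhds hsum
      (Eventually.of_forall fun m => zero_le) ?_
    filter_upwards [eventually_ge_atTop 1] with m hm
    calc P (bad m) ≤ P (E1 m ∪ (E2 m ∪ E3 m)) := measure_mono (hsub m hm)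
      _ ≤ P (E1 m) + P (E2 m ∪ E3 m) := measure_union_le _ _
      _ ≤ P (E1 m) + (P (E2 m) + P (E3 m)) := by
          gcongr
          exact measure_union_le _ _
  -- convergence of m^{-1/5} to 0
  have hεto0 : Tendsto (fun m : ℕ => (m:ℝ)^(-(1/5:ℝ))) atTop (nhds 0) :=
    (tendsto_rpow_neg_atTop (by norm_num)).comp tendsto_natCast_atTop_atTop
  have hone : Tendsto (fun m : ℕ => 1 - P (bad m)) atTop (nhds 1) := by
    have := ENNReal.Tendsto.sub (tendsto_const_nhds (x := (1:ℝ≥0∞)) (f := atTop)) htbad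
      (Or.inl ENNReal.one_ne_top)
    simpa using this
  constructor
  · -- c ≠ 0
    intro hcne
    have hc2 : 0 < |c|/2 := by positivity
    refine tendsto_of_tendsto_of_tendsto_of_le_of_le' hone tendsto_const_nhds ?_
      (Eventually.of_forall fun m => prob_le_one)
    filter_upwards [hεto0.eventually (eventually_le_nhds hc2), eventually_ge_atTop 1]
      with m hmε hm1
    have hcompl : (bad m)ᶜ ⊆ {ω | (m : ℝ) ^ (-(1 / 5 : ℝ)) ≤ |Chat m ω|} := by
      intro ω hω
      simp only [hbad, Set.mem_compl_iff, Set.mem_setOf_eq, not_le] at hω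
      simp only [Set.mem_setOf_eq]
      have h3 : |c| - |Chat m ω| ≤ |Chat m ω - c| :=
        (abs_sub_abs_le_abs_sub c (Chat m ω)).trans_eq (abs_sub_comm c (Chat m ω))
      linarith [hω, hmε, h3]
    calc 1 - P (bad m) = P ((bad m)ᶜ) := (prob_compl_eq_one_sub (hbadMeas m)).symm
      _ ≤ P {ω | (m : ℝ) ^ (-(1 / 5 : ℝ)) ≤ |Chat m ω|} := measure_mono hcompl
  · -- c = 0
    intro hc0
    subst hc0
    refine tendsto_of_tendsto_of_tendsto_of_le_of_le' hone tendsto_const_nhds ?_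
      (Eventually.of_forall fun m => prob_le_one)
    filter_upwards with m
    have hcompl : (bad m)ᶜ ⊆ {ω | |Chat m ω| ≤ (m : ℝ) ^ (-(1 / 5 : ℝ))} := by
      intro ω hω
      simp only [hbad, Set.mem_compl_iff, Set.mem_setOf_eq, not_le, sub_zero] at hω
      exact le_of_lt hω
    calc 1 - P (bad m) = P ((bad m)ᶜ) := (prob_compl_eq_one_sub (hbadMeas m)).symm
      _ ≤ P {ω | |Chat m ω| ≤ (m : ℝ) ^ (-(1 / 5 : ℝ))} := measure_mono hcompl
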